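/- For σ ∈ Sₙ, ρ ∈ Sₘ with m+n ≥ 1, and a word w = uv with |u| = n, |v| = m, the MR product acts on words as (σ *′ ρ)·w = sh((σ·u) ⊗ (ρ·v)). -/

import Mathlib

def shuffle {A : Type*} : List A → List A → Multiset (List A)
  | [], w => {w}
  | u, [] => {u}
  | a :: u, b :: v => (shuffle u (b :: v)).map (a :: ·) + (shuffle (a :: u) v).map (b :: ·)
termination_by u v => u.length + v.length
decreasing_by all_goals simp +arith

def IsPermWord (w : List ℕ) : Prop := w.Perm (List.range w.length)

/-- MR product on permutation words: `σ *′ ρ := sh(σ ⊗ ρ̄)`, `ρ̄(i) = |σ| + ρ(i)`. -/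
def mrW (u v : List ℕ) : Multiset (List ℕ) := shuffle u (v.map (· + u.length))

/-- The action of a permutation word on words: `σ·(a₁⋯aₙ) = a_{σ1}⋯a_{σn}` (0-indexed). -/
def applyW {A : Type*} [Inhabited A] (σ : List ℕ) (w : List A) : List A :=
  σ.map fun i => w.getD i default

lemma shuffle_map {A B : Type*} (f : A → B) :
    ∀ u v : List A, (shuffle u v).map (List.map f) = shuffle (u.map f) (v.map f)
  | [], w => by simp [shuffle]
  | a :: u, [] => by simp [shuffle]
  | a :: u, b :: v => by
      rw [shuffle]
      conv_rhs => rw [List.map_cons, List.map_cons, shuffle,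
        ← (List.map_cons : List.map f (b :: v) = f b :: List.map f v),
        ← (List.map_cons : List.map f (a :: u) = f a :: List.map f u),
        ← shuffle_map f u (b :: v), ← shuffle_map f (a :: u) v]
      simp [Multiset.map_map, Function.comp_def]
termination_by u v => u.length + v.length
decreasing_by all_goals simp +arith

/-- for `σ ∈ Sₙ`, `ρ ∈ Sₘ` with `n + m ≥ 1` and a word `w = uv` with
`|u| = n`, `|v| = m`, the MR product acts on words by `(σ *′ ρ)·w = sh((σ·u) ⊗ (ρ·v))`. -/
theorem mr_action_on_words {A : Type*} [Inhabited A]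
    (σ ρ : List ℕ) (hσ : IsPermWord σ) (hρ : IsPermWord ρ)
    (u v : List A) (hu : u.length = σ.length) (hv : v.length = ρ.length)
    (hnm : 1 ≤ σ.length + ρ.length) :
    (mrW σ ρ).map (fun π => applyW π (u ++ v)) = shuffle (applyW σ u) (applyW ρ v) := by
  have key : (mrW σ ρ).map (fun π => applyW π (u ++ v)) =
      shuffle (σ.map fun i => (u ++ v).getD i default)
        ((ρ.map (· + σ.length)).map fun i => (u ++ v).getD i default) := by
    simpa [applyW, mrW] using shuffle_map (fun i => (u ++ v).getD i default) σ (ρ.map (· + σ.length))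
  rw [key]
  congr 1
  · apply List.map_congr_left
    intro i hi
    have : i < σ.length := by
      have := hσ.mem_iff.mp hi
      simpa using this
    simp [List.getD, List.getElem?_append_left (hu ▸ this)]
  · rw [List.map_map]
    apply List.map_congr_left
    intro j hj
    simp only [Function.comp]
    have h1 : ¬ (j + σ.length < u.length) := by omega
    simp [List.getD, List.getElem?_append_right (by omega : u.length ≤ j + σ.length), hu]
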